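/- Let X have a log-concave density on (0,1). Then for any M, the mean squared error E[(X - q(X))^2] over M-level regular quantizers has a unique local minimum (which is thus the global minimum), i.e., the stationary points satisfying simultaneously the centroid condition and the nearest-neighbor (midpoint) condition are unique. -/

import Mathlib

open MeasureTheory Set

noncomputable def ms (f : ℝ → ℝ) (a b : ℝ) : ℝ := ∫ x in Ioc a b, f x
noncomputable def mo (f : ℝ → ℝ) (a b : ℝ) : ℝ := ∫ x in Ioc a b, x * f x
noncomputable def ct (f : ℝ → ℝ) (a b : ℝ) : ℝ := mo f a b / ms f a b

structure Dens (f : ℝ → ℝ) : Prop where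
  pos : ∀ x ∈ Ioo (0:ℝ) 1, 0 < f x
  zero : ∀ x, x ∉ Ioo (0:ℝ) 1 → f x = 0
  int : Integrable f
  int1 : Integrable (fun x => x * f x)
  lc : ConcaveOn ℝ (Ioo (0:ℝ) 1) (fun x => Real.log (f x))

namespace Dens

variable {f : ℝ → ℝ} (hf : Dens f)
include hf

lemma nonneg (x : ℝ) : 0 ≤ f x := by
  by_cases h : x ∈ Ioo (0:ℝ) 1
  · exact (hf.pos x h).le
  · rw [hf.zero x h]

lemma ii (a b : ℝ) : IntervalIntegrable f volume a b := hf.int.intervalIntegrable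
lemma ii1 (a b : ℝ) : IntervalIntegrable (fun x => x * f x) volume a b :=
  hf.int1.intervalIntegrable

lemma ms_eq (a b : ℝ) (h : a ≤ b) : ms f a b = ∫ x in a..b, f x := by
  rw [intervalIntegral.integral_of_le h]; rfl

lemma mo_eq (a b : ℝ) (h : a ≤ b) : mo f a b = ∫ x in a..b, x * f x := by
  rw [intervalIntegral.integral_of_le h]; rfl

lemma ms_nonneg (a b : ℝ) : 0 ≤ ms f a b :=
  setIntegral_nonneg measurableSet_Ioc (fun x _ => hf.nonneg x)

lemma ms_add {a b c : ℝ} (hab : a ≤ b) (hbc : b ≤ c) :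
    ms f a b + ms f b c = ms f a c := by
  rw [ms_eq hf a b hab, ms_eq hf b c hbc, ms_eq hf a c (hab.trans hbc)]
  exact intervalIntegral.integral_add_adjacent_intervals (hf.ii a b) (hf.ii b c)

lemma mo_add {a b c : ℝ} (hab : a ≤ b) (hbc : b ≤ c) :
    mo f a b + mo f b c = mo f a c := by
  rw [mo_eq hf a b hab, mo_eq hf b c hbc, mo_eq hf a c (hab.trans hbc)]
  exact intervalIntegral.integral_add_adjacent_intervals (hf.ii1 a b) (hf.ii1 b c)

/-- mass positivity -/
lemma ms_pos {a b : ℝ} (ha : 0 ≤ a) (hab : a < b) (h1 : a < 1) : 0 < ms f a b := by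
  set b' := min b 1 with hb'
  have hab' : a < b' := lt_min hab h1
  have h1' : b' ≤ b := min_le_left _ _
  have key : 0 < ms f a b' := by
    rw [ms_eq hf a b' hab'.le]
    refine intervalIntegral.intervalIntegral_pos_of_pos_on (hf.ii a b') (fun x hx => ?_) hab'
    exact hf.pos x ⟨lt_of_le_of_lt ha hx.1, lt_of_lt_of_le hx.2 (min_le_right _ _)⟩
  have := ms_add hf hab'.le h1'
  nlinarith [ms_nonneg hf b' b]

/-- ∫ (x-a) f > 0 -/
lemma ione_pos {a b : ℝ} (ha : 0 ≤ a) (hab : a < b) (h1 : a < 1) :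
    0 < ∫ x in Ioc a b, (x - a) * f x := by
  set b' := min b 1 with hb'
  have hab' : a < b' := lt_min hab h1
  have hii : ∀ u v : ℝ, IntervalIntegrable (fun x => (x - a) * f x) volume u v := by
    intro u v
    have : (fun x => (x - a) * f x) = (fun x => x * f x - a * f x) := by
      funext x; ring
    rw [this]
    exact (hf.ii1 u v).sub ((hf.ii u v).const_mul a)
  have key : 0 < ∫ x in Ioc a b', (x - a) * f x := by
    rw [← intervalIntegral.integral_of_le hab'.le]
    refine intervalIntegral.intervalIntegral_pos_of_pos_on (hii a b') (fun x hx => ?_) hab'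
    have hfx : 0 < f x := hf.pos x ⟨lt_of_le_of_lt ha hx.1, lt_of_lt_of_le hx.2 (min_le_right _ _)⟩
    have : 0 < x - a := sub_pos.mpr hx.1
    positivity
  have hsplit : (∫ x in Ioc a b', (x - a) * f x) + ∫ x in Ioc b' b, (x - a) * f x
      = ∫ x in Ioc a b, (x - a) * f x := by
    rw [← intervalIntegral.integral_of_le hab'.le,
      ← intervalIntegral.integral_of_le (min_le_left b 1),
      ← intervalIntegral.integral_of_le hab.le]
    exact intervalIntegral.integral_add_adjacent_intervals (hii a b') (hii b' b)
  have hrest : 0 ≤ ∫ x in Ioc b' b, (x - a) * f x := by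
    refine setIntegral_nonneg measurableSet_Ioc (fun x hx => ?_)
    have : a ≤ x := le_trans (le_trans (le_min hab.le h1.le) hx.1.le) le_rfl
    have := hf.nonneg x
    nlinarith
  linarith

/-- ∫ (b-x) f > 0 -/
lemma itwo_pos {a b : ℝ} (ha : 0 ≤ a) (hab : a < b) (h1 : a < 1) :
    0 < ∫ x in Ioc a b, (b - x) * f x := by
  set b' := min b 1 with hb'
  have hab' : a < b' := lt_min hab h1
  have hii : ∀ u v : ℝ, IntervalIntegrable (fun x => (b - x) * f x) volume u v := by
    intro u v
    have : (fun x => (b - x) * f x) = (fun x => b * f x - x * f x) := by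
      funext x; ring
    rw [this]
    exact ((hf.ii u v).const_mul b).sub (hf.ii1 u v)
  have key : 0 < ∫ x in Ioc a b', (b - x) * f x := by
    rw [← intervalIntegral.integral_of_le hab'.le]
    refine intervalIntegral.intervalIntegral_pos_of_pos_on (hii a b') (fun x hx => ?_) hab'
    have hfx : 0 < f x := hf.pos x ⟨lt_of_le_of_lt ha hx.1, lt_of_lt_of_le hx.2 (min_le_right _ _)⟩
    have : 0 < b - x := sub_pos.mpr (lt_of_lt_of_le hx.2 (min_le_left _ _))
    positivity
  have hsplit : (∫ x in Ioc a b', (b - x) * f x) + ∫ x in Ioc b' b, (b - x) * f x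
      = ∫ x in Ioc a b, (b - x) * f x := by
    rw [← intervalIntegral.integral_of_le hab'.le,
      ← intervalIntegral.integral_of_le (min_le_left b 1),
      ← intervalIntegral.integral_of_le hab.le]
    exact intervalIntegral.integral_add_adjacent_intervals (hii a b') (hii b' b)
  have hrest : 0 ≤ ∫ x in Ioc b' b, (b - x) * f x := by
    refine setIntegral_nonneg measurableSet_Ioc (fun x hx => ?_)
    have hxb : x ≤ b := hx.2
    have := hf.nonneg x
    nlinarith
  linarith

lemma mo_sub_ms (a b : ℝ) (c : ℝ) (h : a ≤ b) :
    mo f a b - c * ms f a b = ∫ x in Ioc a b, (x - c) * f x := by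
  have h1 : mo f a b = ∫ x in Ioc a b, x * f x := rfl
  have h2 : c * ms f a b = ∫ x in Ioc a b, c * f x := by
    rw [ms]; rw [← integral_const_mul]
  rw [h1, h2, ← integral_sub]
  · congr 1; funext x; ring
  · exact hf.int1.integrableOn
  · exact (hf.int.integrableOn).const_mul c

/-- numerator lower bounds: ∫ (x - a) f ≥ 0 over any Ioc -/
lemma ione_nonneg {a b : ℝ} (hab : a ≤ b) : 0 ≤ ∫ x in Ioc a b, (x - a) * f x := by
  refine setIntegral_nonneg measurableSet_Ioc (fun x hx => ?_)
  have := hf.nonneg x; nlinarith [hx.1.le]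

lemma itwo_nonneg {a b : ℝ} (hab : a ≤ b) : 0 ≤ ∫ x in Ioc a b, (b - x) * f x := by
  refine setIntegral_nonneg measurableSet_Ioc (fun x hx => ?_)
  have := hf.nonneg x; nlinarith [hx.2]

lemma ct_gt {a b : ℝ} (ha : 0 ≤ a) (hab : a < b) (h1 : a < 1) : a < ct f a b := by
  have hms := hf.ms_pos ha hab h1
  have := hf.ione_pos ha hab h1
  rw [← hf.mo_sub_ms a b a hab.le] at this
  rw [ct]
  rw [lt_div_iff₀ hms]
  linarith

lemma ct_lt {a b : ℝ} (ha : 0 ≤ a) (hab : a < b) (h1 : a < 1) : ct f a b < b := by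
  have hms := hf.ms_pos ha hab h1
  have hpos := hf.itwo_pos ha hab h1
  have heq : mo f a b - b * ms f a b = ∫ x in Ioc a b, (x - b) * f x :=
    hf.mo_sub_ms a b b hab.le
  have hneg : (∫ x in Ioc a b, (x - b) * f x) = -∫ x in Ioc a b, (b - x) * f x := by
    rw [← integral_neg]
    apply setIntegral_congr_fun measurableSet_Ioc
    intro x _; ring
  rw [ct, div_lt_iff₀ hms]
  nlinarith

/-- strict monotone in right endpoint (truncation-aware) -/
lemma ct_mono_b {a b b' : ℝ} (ha : 0 ≤ a) (hab : a < b) (hbb : b < b') (hblt : b < 1) :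
    ct f a b < ct f a b' := by
  have hms : 0 < ms f a b := hf.ms_pos ha hab (hab.trans hblt)
  have hms' : 0 < ms f a b' := hf.ms_pos ha (hab.trans hbb) (hab.trans hblt)
  have hmsb : 0 < ms f b b' := hf.ms_pos (ha.trans hab.le) hbb hblt
  have key1 : b * ms f b b' < mo f b b' := by
    have := hf.ione_pos (ha.trans hab.le) hbb hblt
    rw [← hf.mo_sub_ms b b' b hbb.le] at this
    linarith
  have key2 : mo f a b < b * ms f a b := by
    have hpos := hf.itwo_pos ha hab (hab.trans hblt)
    have heq : mo f a b - b * ms f a b = ∫ x in Ioc a b, (x - b) * f x :=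
      hf.mo_sub_ms a b b hab.le
    have hneg : (∫ x in Ioc a b, (x - b) * f x) = -∫ x in Ioc a b, (b - x) * f x := by
      rw [← integral_neg]
      apply setIntegral_congr_fun measurableSet_Ioc
      intro x _; ring
    linarith
  have hmo : mo f a b + mo f b b' = mo f a b' := hf.mo_add hab.le hbb.le
  have hmsadd : ms f a b + ms f b b' = ms f a b' := hf.ms_add hab.le hbb.le
  rw [ct, ct, div_lt_div_iff₀ hms hms', ← hmo, ← hmsadd]
  nlinarith [mul_lt_mul_of_pos_right key2 hmsb, mul_lt_mul_of_pos_right key1 hms]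

/-- nonstrict monotone in left endpoint -/
lemma ct_mono_a {a a' b : ℝ} (ha : 0 ≤ a) (haa : a ≤ a') (hab : a' < b) (hb1 : b ≤ 1) :
    ct f a b ≤ ct f a' b := by
  rcases eq_or_lt_of_le haa with rfl | haa'
  · exact le_rfl
  have ha' : 0 ≤ a' := ha.trans haa
  have hab0 : a < b := haa'.trans hab
  have h1' : a' < 1 := lt_of_lt_of_le hab hb1
  have h1 : a < 1 := lt_of_lt_of_le hab0 hb1
  have hms : 0 < ms f a b := hf.ms_pos ha hab0 h1
  have hms' : 0 < ms f a' b := hf.ms_pos ha' hab h1'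
  have hmsa : 0 ≤ ms f a a' := hf.ms_nonneg a a'
  have key1 : a' * ms f a' b ≤ mo f a' b := by
    have h0 := hf.ione_nonneg (a := a') (b := b) hab.le
    rw [← hf.mo_sub_ms a' b a' hab.le] at h0
    linarith
  have key2 : mo f a a' ≤ a' * ms f a a' := by
    have h0 : (∫ x in Ioc a a', (x - a') * f x) ≤ 0 := by
      refine setIntegral_nonpos measurableSet_Ioc (fun x hx => ?_)
      have h2 := hf.nonneg x
      nlinarith [hx.2]
    rw [← hf.mo_sub_ms a a' a' haa'.le] at h0
    linarith
  have hmo : mo f a a' + mo f a' b = mo f a b := hf.mo_add haa'.le hab.le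
  have hmsadd : ms f a a' + ms f a' b = ms f a b := hf.ms_add haa'.le hab.le
  rw [ct, ct, div_le_div_iff₀ hms hms', ← hmo, ← hmsadd]
  nlinarith [mul_le_mul_of_nonneg_right key2 hms'.le, mul_le_mul_of_nonneg_right key1 hmsa]

lemma g_ii (m a b : ℝ) : IntervalIntegrable (fun x => f (x + m)) volume a b := by
  simpa using (hf.ii (a + m) (b + m)).comp_add_right m

lemma xg_ii (m a b : ℝ) : IntervalIntegrable (fun x => x * f (x + m)) volume a b := by
  have h1 : IntervalIntegrable (fun x => (x + m) * f (x + m)) volume a b := by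
    simpa using (hf.ii1 (a + m) (b + m)).comp_add_right m
  have h2 := (hf.g_ii m a b).const_mul m
  have h3 : (fun x => x * f (x + m)) = fun x => (x + m) * f (x + m) - m * f (x + m) :=
    funext fun x => by ring
  rw [h3]; exact h1.sub h2

lemma ms_shift {a b : ℝ} (m : ℝ) (hab : a ≤ b) :
    ms f (a + m) (b + m) = ∫ x in Ioc a b, f (x + m) := by
  rw [hf.ms_eq _ _ (by linarith), ← intervalIntegral.integral_comp_add_right f m,
    intervalIntegral.integral_of_le hab]

lemma mo_shift {a b : ℝ} (m : ℝ) (hab : a ≤ b) :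
    mo f (a + m) (b + m)
      = (∫ x in Ioc a b, x * f (x + m)) + m * ∫ x in Ioc a b, f (x + m) := by
  rw [hf.mo_eq _ _ (by linarith),
    ← intervalIntegral.integral_comp_add_right (fun x => x * f x) m]
  have h3 : (fun x => (x + m) * f (x + m)) = fun x => x * f (x + m) + m * f (x + m) :=
    funext fun x => by ring
  calc (∫ x in a..b, (x + m) * f (x + m))
      = ∫ x in a..b, (x * f (x + m) + m * f (x + m)) := by rw [h3]
    _ = (∫ x in a..b, x * f (x + m)) + ∫ x in a..b, m * f (x + m) :=
        intervalIntegral.integral_add (hf.xg_ii m a b) ((hf.g_ii m a b).const_mul m)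
    _ = (∫ x in Ioc a b, x * f (x + m)) + m * ∫ x in Ioc a b, f (x + m) := by
        rw [intervalIntegral.integral_const_mul, intervalIntegral.integral_of_le hab,
          intervalIntegral.integral_of_le hab]

/-- four point log-concavity inequality -/
lemma fourpt {m x y : ℝ} (hm : 0 ≤ m) (hyx : y ≤ x) (hy : 0 < y) (hx : x ≤ 1) :
    f (x + m) * f y ≤ f x * f (y + m) := by
  by_cases hxm : x + m ∈ Ioo (0:ℝ) 1
  · rcases eq_or_lt_of_le hyx with rfl | hyx'
    · exact le_of_eq (mul_comm _ _)
    rcases eq_or_lt_of_le hm with rfl | hm'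
    · simp [add_zero, mul_comm]
    have hx1 : x < 1 := by
      have := hxm.2; linarith
    have hxI : x ∈ Ioo (0:ℝ) 1 := ⟨hy.trans hyx', hx1⟩
    have hyI : y ∈ Ioo (0:ℝ) 1 := ⟨hy, hyx'.trans hx1⟩
    have hymI : y + m ∈ Ioo (0:ℝ) 1 := ⟨by linarith, by have := hxm.2; linarith⟩
    set t : ℝ := m / (x + m - y) with ht
    have hden : 0 < x + m - y := by linarith
    have ht0 : 0 < t := div_pos hm' hden
    have ht1 : t < 1 := (div_lt_one hden).mpr (by linarith)
    have hcx : t * y + (1 - t) * (x + m) = x := by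
      rw [ht]; linear_combination -(div_mul_cancel₀ m hden.ne')
    have hcy : (1 - t) * y + t * (x + m) = y + m := by
      rw [ht]; linear_combination (div_mul_cancel₀ m hden.ne')
    have hcc : ∀ u ∈ Ioo (0:ℝ) 1, ∀ v ∈ Ioo (0:ℝ) 1, ∀ p q : ℝ, 0 ≤ p → 0 ≤ q →
        p + q = 1 → p * Real.log (f u) + q * Real.log (f v)
          ≤ Real.log (f (p * u + q * v)) := by
      intro u hu v hv p q hp hq hpq
      simpa [smul_eq_mul] using hf.lc.2 hu hv hp hq hpq
    have h1 := hcc y hyI (x + m) hxm t (1 - t) ht0.le (by linarith) (by ring)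
    have h2 := hcc y hyI (x + m) hxm (1 - t) t (by linarith) ht0.le (by ring)
    rw [hcx] at h1
    rw [hcy] at h2
    have p1 := hf.pos _ hxm
    have p2 := hf.pos _ hyI
    have p3 := hf.pos _ hxI
    have p4 := hf.pos _ hymI
    have key : Real.log (f (x + m)) + Real.log (f y)
        ≤ Real.log (f x) + Real.log (f (y + m)) := by linarith
    calc f (x + m) * f y = Real.exp (Real.log (f (x + m)) + Real.log (f y)) := by
          rw [Real.exp_add, Real.exp_log p1, Real.exp_log p2]
      _ ≤ Real.exp (Real.log (f x) + Real.log (f (y + m))) := Real.exp_le_exp.mpr key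
      _ = f x * f (y + m) := by rw [Real.exp_add, Real.exp_log p3, Real.exp_log p4]
  · rw [hf.zero _ hxm, zero_mul]
    exact mul_nonneg (hf.nonneg x) (hf.nonneg (y + m))

/-- the symmetrized double integral identity -/
lemma core_E {a b m : ℝ} (hab : a ≤ b) :
    (∫ z in Ioc a b ×ˢ Ioc a b,
        (z.1 - z.2) * (f (z.1 + m) * f z.2 - f z.1 * f (z.2 + m)) ∂(volume.prod volume))
    = 2 * ((∫ x in Ioc a b, x * f (x + m)) * ms f a b
        - mo f a b * (∫ x in Ioc a b, f (x + m))) := by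
  have i_f : Integrable f (volume.restrict (Ioc a b)) := hf.int.integrableOn
  have i_xf : Integrable (fun x => x * f x) (volume.restrict (Ioc a b)) :=
    hf.int1.integrableOn
  have i_g : Integrable (fun x => f (x + m)) (volume.restrict (Ioc a b)) := (hf.g_ii m a b).1
  have i_xg : Integrable (fun x => x * f (x + m)) (volume.restrict (Ioc a b)) :=
    (hf.xg_ii m a b).1
  rw [← Measure.prod_restrict]
  have I1 : Integrable (fun z : ℝ × ℝ => (z.1 * f (z.1 + m)) * f z.2)
      ((volume.restrict (Ioc a b)).prod (volume.restrict (Ioc a b))) := i_xg.mul_prod i_f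
  have I2 : Integrable (fun z : ℝ × ℝ => (z.1 * f z.1) * f (z.2 + m))
      ((volume.restrict (Ioc a b)).prod (volume.restrict (Ioc a b))) := i_xf.mul_prod i_g
  have I3 : Integrable (fun z : ℝ × ℝ => f (z.1 + m) * (z.2 * f z.2))
      ((volume.restrict (Ioc a b)).prod (volume.restrict (Ioc a b))) := i_g.mul_prod i_xf
  have I4 : Integrable (fun z : ℝ × ℝ => f z.1 * (z.2 * f (z.2 + m)))
      ((volume.restrict (Ioc a b)).prod (volume.restrict (Ioc a b))) := i_f.mul_prod i_xg
  have hsum : (fun z : ℝ × ℝ =>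
      (z.1 - z.2) * (f (z.1 + m) * f z.2 - f z.1 * f (z.2 + m)))
      = fun z : ℝ × ℝ => ((z.1 * f (z.1 + m)) * f z.2 - (z.1 * f z.1) * f (z.2 + m)
          - f (z.1 + m) * (z.2 * f z.2)) + f z.1 * (z.2 * f (z.2 + m)) :=
    funext fun z => by ring
  have e1 := integral_add ((I1.sub I2).sub I3) I4
  have e2 := integral_sub (I1.sub I2) I3
  have e3 := integral_sub I1 I2
  simp only [Pi.sub_apply] at e1 e2 e3
  have p1 := integral_prod_mul (μ := volume.restrict (Ioc a b))
    (ν := volume.restrict (Ioc a b)) (fun x => x * f (x + m)) f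
  have p2 := integral_prod_mul (μ := volume.restrict (Ioc a b))
    (ν := volume.restrict (Ioc a b)) (fun x => x * f x) (fun x => f (x + m))
  have p3 := integral_prod_mul (μ := volume.restrict (Ioc a b))
    (ν := volume.restrict (Ioc a b)) (fun x => f (x + m)) (fun x => x * f x)
  have p4 := integral_prod_mul (μ := volume.restrict (Ioc a b))
    (ν := volume.restrict (Ioc a b)) f (fun x => x * f (x + m))
  rw [hsum, e1, e2, e3, p1, p2, p3, p4]
  show _ = 2 * ((∫ x in Ioc a b, x * f (x + m)) * (∫ x in Ioc a b, f x)
      - (∫ x in Ioc a b, x * f x) * (∫ x in Ioc a b, f (x + m)))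
  ring

lemma core_nonpos {a b m : ℝ} (ha : 0 ≤ a) (hb1 : b ≤ 1) (hm : 0 ≤ m) :
    (∫ z in Ioc a b ×ˢ Ioc a b,
        (z.1 - z.2) * (f (z.1 + m) * f z.2 - f z.1 * f (z.2 + m)) ∂(volume.prod volume))
      ≤ 0 := by
  refine setIntegral_nonpos (measurableSet_Ioc.prod measurableSet_Ioc) (fun z hz => ?_)
  obtain ⟨hz1, hz2⟩ := hz
  rcases le_total z.2 z.1 with hyx | hxy
  · have h4 := hf.fourpt hm hyx (lt_of_le_of_lt ha hz2.1) (hz1.2.trans hb1)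
    nlinarith [sub_nonneg.mpr hyx]
  · have h4 := hf.fourpt hm hxy (lt_of_le_of_lt ha hz1.1) (hz2.2.trans hb1)
    nlinarith [sub_nonneg.mpr hxy]

/-- the shift lemma -/
lemma ct_shift {a b m : ℝ} (ha : 0 ≤ a) (hab : a < b) (hb1 : b ≤ 1) (hm : 0 ≤ m)
    (ham : a + m < 1) : ct f (a + m) (b + m) ≤ ct f a b + m := by
  have hAf : 0 < ms f a b := hf.ms_pos ha hab (lt_of_lt_of_le (hab.trans_le hb1) le_rfl |>.trans_le le_rfl)
  have hAg : 0 < ms f (a + m) (b + m) := hf.ms_pos (by linarith) (by linarith) ham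
  have hAg' : ms f (a + m) (b + m) = ∫ x in Ioc a b, f (x + m) := hf.ms_shift m hab.le
  have hBg' := hf.mo_shift (a := a) (b := b) m hab.le
  have key : (∫ x in Ioc a b, x * f (x + m)) * ms f a b
      ≤ mo f a b * (∫ x in Ioc a b, f (x + m)) := by
    have h1 := hf.core_E (a := a) (b := b) (m := m) hab.le
    have h2 := hf.core_nonpos (a := a) (b := b) (m := m) ha hb1 hm
    linarith
  rw [ct, ct, div_add' _ _ _ (ne_of_gt hAf), div_le_div_iff₀ hAg hAf]
  rw [hAg', hBg']
  nlinarith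

lemma pt_nonpos {a b m : ℝ} (ha : 0 ≤ a) (hb1 : b ≤ 1) (hm : 0 ≤ m) :
    ∀ z ∈ Ioc a b ×ˢ Ioc a b,
      (z.1 - z.2) * (f (z.1 + m) * f z.2 - f z.1 * f (z.2 + m)) ≤ 0 := by
  intro z hz
  obtain ⟨hz1, hz2⟩ := hz
  rcases le_total z.2 z.1 with hyx | hxy
  · have h4 := hf.fourpt hm hyx (lt_of_le_of_lt ha hz2.1) (hz1.2.trans hb1)
    nlinarith [sub_nonneg.mpr hyx]
  · have h4 := hf.fourpt hm hxy (lt_of_le_of_lt ha hz1.1) (hz2.2.trans hb1)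
    nlinarith [sub_nonneg.mpr hxy]

lemma ms_tail {u v : ℝ} (hu : 1 ≤ u) : ms f u v = 0 := by
  rw [ms]
  calc ∫ x in Ioc u v, f x = ∫ x in Ioc u v, (0:ℝ) :=
        setIntegral_congr_fun measurableSet_Ioc (fun x hx => hf.zero x
          (by simp only [mem_Ioo, not_and, not_lt]; intro _; linarith [hx.1]))
    _ = 0 := by simp

lemma mo_tail {u v : ℝ} (hu : 1 ≤ u) : mo f u v = 0 := by
  rw [mo]
  calc ∫ x in Ioc u v, x * f x = ∫ x in Ioc u v, (0:ℝ) :=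
        setIntegral_congr_fun measurableSet_Ioc (fun x hx => by
          rw [hf.zero x (by simp only [mem_Ioo, not_and, not_lt]; intro _; linarith [hx.1]),
            mul_zero])
    _ = 0 := by simp

lemma core_neg {a m : ℝ} (ha : 0 ≤ a) (hm : 0 < m) (ham : a + m < 1) :
    (∫ z in Ioc a 1 ×ˢ Ioc a 1,
        (z.1 - z.2) * (f (z.1 + m) * f z.2 - f z.1 * f (z.2 + m)) ∂(volume.prod volume))
      < 0 := by
  have hm1 : m < 1 := by linarith
  have ha1m : a < 1 - m := by linarith
  set R : Set (ℝ × ℝ) := Ioo (1 - m) 1 ×ˢ Ioo a (1 - m) with hR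
  set D : Set (ℝ × ℝ) := (Ioc a 1 ×ˢ Ioc a 1) \ R with hD
  have hRsub : R ⊆ Ioc a 1 ×ˢ Ioc a 1 := by
    rintro ⟨x, y⟩ ⟨hx, hy⟩
    simp only [mem_Ioo] at hx hy
    exact ⟨⟨by linarith [hx.1], by linarith [hx.2]⟩, ⟨by linarith [hy.1], by linarith [hy.2]⟩⟩
  -- integrability of the integrand on the product
  have i_f : Integrable f (volume.restrict (Ioc a 1)) := hf.int.integrableOn
  have i_xf : Integrable (fun x => x * f x) (volume.restrict (Ioc a 1)) :=
    hf.int1.integrableOn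
  have i_g : Integrable (fun x => f (x + m)) (volume.restrict (Ioc a 1)) := (hf.g_ii m a 1).1
  have i_xg : Integrable (fun x => x * f (x + m)) (volume.restrict (Ioc a 1)) :=
    (hf.xg_ii m a 1).1
  have Ih : IntegrableOn (fun z : ℝ × ℝ =>
      (z.1 - z.2) * (f (z.1 + m) * f z.2 - f z.1 * f (z.2 + m)))
      (Ioc a 1 ×ˢ Ioc a 1) (volume.prod volume) := by
    rw [IntegrableOn, ← Measure.prod_restrict]
    have hsum : (fun z : ℝ × ℝ =>
        (z.1 - z.2) * (f (z.1 + m) * f z.2 - f z.1 * f (z.2 + m)))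
        = fun z : ℝ × ℝ => ((z.1 * f (z.1 + m)) * f z.2 - (z.1 * f z.1) * f (z.2 + m)
            - f (z.1 + m) * (z.2 * f z.2)) + f z.1 * (z.2 * f (z.2 + m)) :=
      funext fun z => by ring
    rw [hsum]
    exact (((i_xg.mul_prod i_f).sub (i_xf.mul_prod i_g)).sub
      (i_g.mul_prod i_xf)).add (i_f.mul_prod i_xg)
  have hpt : ∀ z ∈ R, (z.1 - z.2) * (f (z.1 + m) * f z.2 - f z.1 * f (z.2 + m)) < 0 := by
    rintro ⟨x, y⟩ ⟨hx, hy⟩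
    simp only [mem_Ioo] at hx hy
    have gx : f (x + m) = 0 := hf.zero _ (by
      simp only [mem_Ioo, not_and, not_lt]; intro _; linarith [hx.1])
    have fx : 0 < f x := hf.pos _ ⟨by linarith [hx.1], hx.2⟩
    have fy : 0 < f y := hf.pos _ ⟨by linarith [hy.1], by linarith [hy.2]⟩
    have gy : 0 < f (y + m) := hf.pos _ ⟨by linarith [hy.1], by linarith [hy.2]⟩
    have hxy : y < x := by linarith [hx.1, hy.2]
    show (x - y) * (f (x + m) * f y - f x * f (y + m)) < 0
    rw [gx]
    nlinarith [mul_pos (sub_pos.mpr hxy) (mul_pos fx gy)]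
  have hmeasR : MeasurableSet R := measurableSet_Ioo.prod measurableSet_Ioo
  have hRneg : (∫ z in R,
      (z.1 - z.2) * (f (z.1 + m) * f z.2 - f z.1 * f (z.2 + m)) ∂(volume.prod volume)) < 0 := by
    have hnn : 0 ≤ᵐ[(volume.prod volume).restrict R] (fun z : ℝ × ℝ =>
        -((z.1 - z.2) * (f (z.1 + m) * f z.2 - f z.1 * f (z.2 + m)))) := by
      refine (ae_restrict_iff' hmeasR).mpr (Filter.Eventually.of_forall (fun z hz => ?_))
      simp only [Pi.zero_apply]
      linarith [hpt z hz]
    have hint : IntegrableOn (fun z : ℝ × ℝ =>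
        -((z.1 - z.2) * (f (z.1 + m) * f z.2 - f z.1 * f (z.2 + m)))) R
        (volume.prod volume) := (Ih.mono_set hRsub).neg
    have hpos : 0 < ∫ z in R,
        -((z.1 - z.2) * (f (z.1 + m) * f z.2 - f z.1 * f (z.2 + m))) ∂(volume.prod volume) := by
      rw [setIntegral_pos_iff_support_of_nonneg_ae hnn hint]
      have hsupp : R ⊆ Function.support (fun z : ℝ × ℝ =>
          -((z.1 - z.2) * (f (z.1 + m) * f z.2 - f z.1 * f (z.2 + m)))) := by
        intro z hz
        simp only [Function.mem_support, ne_eq, neg_eq_zero]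
        exact ne_of_lt (hpt z hz)
      have hie : Function.support (fun z : ℝ × ℝ =>
          -((z.1 - z.2) * (f (z.1 + m) * f z.2 - f z.1 * f (z.2 + m)))) ∩ R = R :=
        inter_eq_right.mpr hsupp
      rw [hie, hR, Measure.prod_prod, Real.volume_Ioo, Real.volume_Ioo]
      exact ENNReal.mul_pos (ENNReal.ofReal_pos.mpr (by linarith)).ne'
        (ENNReal.ofReal_pos.mpr (by linarith)).ne'
    rw [integral_neg] at hpos
    linarith
  have hDneg : (∫ z in D,
      (z.1 - z.2) * (f (z.1 + m) * f z.2 - f z.1 * f (z.2 + m)) ∂(volume.prod volume)) ≤ 0 := by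
    refine setIntegral_nonpos ((measurableSet_Ioc.prod measurableSet_Ioc).diff hmeasR)
      (fun z hz => hf.pt_nonpos ha le_rfl hm.le z hz.1)
  have hsplit : (∫ z in Ioc a 1 ×ˢ Ioc a 1,
      (z.1 - z.2) * (f (z.1 + m) * f z.2 - f z.1 * f (z.2 + m)) ∂(volume.prod volume))
      = (∫ z in R, (z.1 - z.2) * (f (z.1 + m) * f z.2 - f z.1 * f (z.2 + m))
          ∂(volume.prod volume))
        + ∫ z in D, (z.1 - z.2) * (f (z.1 + m) * f z.2 - f z.1 * f (z.2 + m))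
          ∂(volume.prod volume) := by
    rw [← setIntegral_union disjoint_sdiff_right
      ((measurableSet_Ioc.prod measurableSet_Ioc).diff hmeasR)
      (Ih.mono_set hRsub) (Ih.mono_set diff_subset), union_diff_cancel hRsub]
  linarith

/-- strict shift lemma at the right boundary -/
lemma ct_shift_strict {a m : ℝ} (ha : 0 ≤ a) (hm : 0 < m) (ham : a + m < 1) :
    ct f (a + m) 1 < ct f a 1 + m := by
  have ha1 : a < 1 := by linarith
  have hAf : 0 < ms f a 1 := hf.ms_pos ha ha1 ha1
  have hAg : 0 < ms f (a + m) 1 := hf.ms_pos (by linarith) (by linarith) ham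
  have e_ms : ms f (a + m) (1 + m) = ms f (a + m) 1 := by
    have h1 := hf.ms_add (a := a + m) (b := 1) (c := 1 + m) (by linarith) (by linarith)
    have h2 := hf.ms_tail (u := 1) (v := 1 + m) le_rfl
    linarith
  have e_mo : mo f (a + m) (1 + m) = mo f (a + m) 1 := by
    have h1 := hf.mo_add (a := a + m) (b := 1) (c := 1 + m) (by linarith) (by linarith)
    have h2 := hf.mo_tail (u := 1) (v := 1 + m) le_rfl
    linarith
  have hAg' : ms f (a + m) 1 = ∫ x in Ioc a 1, f (x + m) := by
    rw [← e_ms, hf.ms_shift m ha1.le]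
  have hBg' : mo f (a + m) 1
      = (∫ x in Ioc a 1, x * f (x + m)) + m * ∫ x in Ioc a 1, f (x + m) := by
    rw [← e_mo, hf.mo_shift m ha1.le]
  have key : (∫ x in Ioc a 1, x * f (x + m)) * ms f a 1
      < mo f a 1 * (∫ x in Ioc a 1, f (x + m)) := by
    have h1 := hf.core_E (a := a) (b := 1) (m := m) ha1.le
    have h2 := hf.core_neg ha hm ham
    linarith
  rw [ct, ct, div_add' _ _ _ (ne_of_gt hAf), div_lt_div_iff₀ hAg hAf]
  rw [hAg', hBg']
  nlinarith

end Dens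

/-- extended centroid, defined across the diagonal -/
noncomputable def ctil (f : ℝ → ℝ) (a b : ℝ) : ℝ := if a < b then ct f a b else (a + b) / 2

namespace Dens

variable {f : ℝ → ℝ} (hf : Dens f)
include hf

lemma ctil_of_lt {a b : ℝ} (h : a < b) : ctil f a b = ct f a b := if_pos h
lemma ctil_of_ge {a b : ℝ} (h : b ≤ a) : ctil f a b = (a + b) / 2 := if_neg (not_lt.mpr h)

lemma ctil_mem {a b : ℝ} (ha : a ∈ Icc (0:ℝ) 1) (hb : b ∈ Icc (0:ℝ) 1) :
    ctil f a b ∈ Icc (0:ℝ) 1 := by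
  rcases lt_or_ge a b with h | h
  · rw [hf.ctil_of_lt h]
    have h1 := hf.ct_gt ha.1 h (lt_of_lt_of_le h hb.2)
    have h2 := hf.ct_lt ha.1 h (lt_of_lt_of_le h hb.2)
    exact ⟨le_of_lt (lt_of_le_of_lt ha.1 h1), le_of_lt (lt_of_lt_of_le h2 hb.2)⟩
  · rw [hf.ctil_of_ge h]
    constructor <;> [linarith [ha.1, hb.1]; linarith [ha.2, hb.2]]

lemma ctil_lt_right {a b : ℝ} (ha : 0 ≤ a) (h : a < b) (hb : b ≤ 1) : ctil f a b < b := by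
  rw [hf.ctil_of_lt h]
  exact hf.ct_lt ha h (lt_of_lt_of_le h hb)

lemma ctil_gt_left {a b : ℝ} (ha : 0 ≤ a) (h : a < b) (hb : b ≤ 1) : a < ctil f a b := by
  rw [hf.ctil_of_lt h]
  exact hf.ct_gt ha h (lt_of_lt_of_le h hb)

lemma ctil_le_left {a b : ℝ} (h : b ≤ a) : ctil f a b ≤ a := by
  rw [hf.ctil_of_ge h]; linarith

lemma ctil_mono_left {a a' b : ℝ} (ha : a ∈ Icc (0:ℝ) 1) (ha' : a' ∈ Icc (0:ℝ) 1)
    (hb : b ∈ Icc (0:ℝ) 1) (haa : a ≤ a') : ctil f a b ≤ ctil f a' b := by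
  rcases lt_or_ge a' b with h' | h'
  · have h : a < b := lt_of_le_of_lt haa h'
    rw [hf.ctil_of_lt h, hf.ctil_of_lt h']
    exact hf.ct_mono_a ha.1 haa h' hb.2
  · rcases lt_or_ge a b with h | h
    · rw [hf.ctil_of_lt h, hf.ctil_of_ge h']
      have := hf.ct_lt ha.1 h (lt_of_lt_of_le h hb.2)
      linarith
    · rw [hf.ctil_of_ge h, hf.ctil_of_ge h']
      linarith

lemma ctil_mono_right {a b b' : ℝ} (ha : a ∈ Icc (0:ℝ) 1) (hb : b ∈ Icc (0:ℝ) 1)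
    (hb' : b' ∈ Icc (0:ℝ) 1) (hbb : b ≤ b') : ctil f a b ≤ ctil f a b' := by
  rcases lt_or_ge a b with h | h
  · have h' : a < b' := lt_of_lt_of_le h hbb
    rw [hf.ctil_of_lt h, hf.ctil_of_lt h']
    rcases eq_or_lt_of_le hbb with rfl | hbb'
    · exact le_rfl
    · exact (hf.ct_mono_b ha.1 h hbb' (lt_of_lt_of_le hbb' hb'.2)).le
  · rcases lt_or_ge a b' with h' | h'
    · rw [hf.ctil_of_ge h, hf.ctil_of_lt h']
      have := hf.ct_gt ha.1 h' (lt_of_lt_of_le h' hb'.2)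
      linarith
    · rw [hf.ctil_of_ge h, hf.ctil_of_ge h']
      linarith

/-- Existence of a stationary boundary sequence via Knaster–Tarski. -/
lemma exists_fix (M : ℕ) (hM : 0 < M) :
    ∃ a : ℕ → ℝ, a 0 = 0 ∧ a M = 1 ∧ (∀ i, i < M → a i < a (i + 1)) ∧
      (∀ i, a i ∈ Icc (0:ℝ) 1) ∧
      (∀ k, 1 ≤ k → k < M →
        2 * a k = ctil f (a (k - 1)) (a k) + ctil f (a k) (a (k + 1))) := by
  classical
  -- the Lloyd-type monotone map
  set T : (ℕ → ℝ) → (ℕ → ℝ) := fun v k =>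
    if k = 0 then 0 else if M ≤ k then 1
    else (ctil f (v (k - 1)) (v k) + ctil f (v k) (v (k + 1))) / 2 with hT
  have hTbox : ∀ v : ℕ → ℝ, (∀ k, v k ∈ Icc (0:ℝ) 1) → ∀ k, T v k ∈ Icc (0:ℝ) 1 := by
    intro v hv k
    rw [hT]
    dsimp only
    split_ifs with h0 hM'
    · exact ⟨le_rfl, zero_le_one⟩
    · exact ⟨zero_le_one, le_rfl⟩
    · have c1 := hf.ctil_mem (hv (k - 1)) (hv k)
      have c2 := hf.ctil_mem (hv k) (hv (k + 1))
      constructor <;> [linarith [c1.1, c2.1]; linarith [c1.2, c2.2]]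
  have hTmono : ∀ v w : ℕ → ℝ, (∀ k, v k ∈ Icc (0:ℝ) 1) → (∀ k, w k ∈ Icc (0:ℝ) 1) →
      (∀ k, v k ≤ w k) → ∀ k, T v k ≤ T w k := by
    intro v w hv hw hvw k
    rw [hT]; dsimp only
    split_ifs with h0 hM'
    · exact le_rfl
    · exact le_rfl
    · have c1 : ctil f (v (k - 1)) (v k) ≤ ctil f (w (k - 1)) (w k) :=
        le_trans (hf.ctil_mono_left (hv (k-1)) (hw (k-1)) (hv k) (hvw (k-1)))
          (hf.ctil_mono_right (hw (k-1)) (hv k) (hw k) (hvw k))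
      have c2 : ctil f (v k) (v (k + 1)) ≤ ctil f (w k) (w (k + 1)) :=
        le_trans (hf.ctil_mono_left (hv k) (hw k) (hv (k+1)) (hvw k))
          (hf.ctil_mono_right (hw k) (hv (k+1)) (hw (k+1)) (hvw (k+1)))
      linarith
  set S : Set (ℕ → ℝ) := {v | (∀ k, v k ∈ Icc (0:ℝ) 1) ∧ ∀ k, v k ≤ T v k} with hS
  set v₀ : ℕ → ℝ := fun k => if M ≤ k then 1 else 0 with hv₀
  have hv₀box : ∀ k, v₀ k ∈ Icc (0:ℝ) 1 := by
    intro k; rw [hv₀]; dsimp only; split_ifs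
    · exact ⟨zero_le_one, le_rfl⟩
    · exact ⟨le_rfl, zero_le_one⟩
  have hv₀S : v₀ ∈ S := by
    refine ⟨hv₀box, fun k => ?_⟩
    rw [hT]; dsimp only
    by_cases h0 : k = 0
    · rw [if_pos h0]
      subst h0
      rw [hv₀]; dsimp only
      rw [if_neg (by omega)]
    · rw [if_neg h0]
      by_cases hMk : M ≤ k
      · rw [if_pos hMk]
        exact (hv₀box k).2
      · rw [if_neg hMk]
        have hv0 : v₀ k = 0 := by rw [hv₀]; dsimp only; exact if_neg hMk
        rw [hv0]
        have c1 := hf.ctil_mem (hv₀box (k - 1)) (hv₀box k)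
        have c2 := hf.ctil_mem (hv₀box k) (hv₀box (k + 1))
        rw [hv0] at c1 c2
        linarith [c1.1, c2.1]
  have hSne : S.Nonempty := ⟨v₀, hv₀S⟩
  set a : ℕ → ℝ := fun k => sSup ((fun v => v k) '' S) with ha
  have hbdd : ∀ k, BddAbove ((fun v : ℕ → ℝ => v k) '' S) := by
    intro k
    refine ⟨1, ?_⟩
    rintro x ⟨v, hv, rfl⟩
    exact (hv.1 k).2
  have hles : ∀ v ∈ S, ∀ k, v k ≤ a k := by
    intro v hv k
    exact le_csSup (hbdd k) ⟨v, hv, rfl⟩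
  have habox : ∀ k, a k ∈ Icc (0:ℝ) 1 := by
    intro k
    constructor
    · exact le_trans (hv₀box k).1 (hles v₀ hv₀S k)
    · refine csSup_le (hSne.image _) ?_
      rintro x ⟨v, hv, rfl⟩
      exact (hv.1 k).2
  have hale : ∀ k, a k ≤ T a k := by
    intro k
    refine csSup_le (hSne.image _) ?_
    rintro x ⟨v, hv, rfl⟩
    exact le_trans (hv.2 k) (hTmono v a hv.1 habox (hles v hv) k)
  have haS : a ∈ S := ⟨habox, hale⟩
  have hTaS : T a ∈ S := ⟨hTbox a habox, hTmono a (T a) habox (hTbox a habox) hale⟩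
  have hfix : ∀ k, T a k = a k := fun k => le_antisymm (hles (T a) hTaS k) (hale k)
  -- basic values
  have ha0 : a 0 = 0 := by
    rw [← hfix 0, hT]
    norm_num
  have haM : ∀ k, M ≤ k → a k = 1 := by
    intro k hk
    rw [← hfix k, hT]
    dsimp only
    rw [if_neg (by omega), if_pos hk]
  have hrel : ∀ k, 1 ≤ k → k < M →
      2 * a k = ctil f (a (k - 1)) (a k) + ctil f (a k) (a (k + 1)) := by
    intro k h1 h2
    conv_lhs => rw [← hfix k]
    rw [hT]; dsimp only
    rw [if_neg (by omega), if_neg (by omega)]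
    ring
  -- strict monotonicity of the fixed point
  have hordered : ∀ j, j < M → a j < a (j + 1) := by
    intro j
    induction j using Nat.strong_induction_on with
    | _ j IH =>
      intro hjM
      by_contra hcon
      push_neg at hcon
      rcases Nat.eq_zero_or_pos j with rfl | hj1
      · -- a 1 ≤ a 0 = 0, so a 1 = 0; cascade of zeros
        have ha1 : a 1 = 0 := le_antisymm (by rw [ha0] at hcon; exact hcon) (habox 1).1
        have hzero : ∀ i, i ≤ M → a i = 0 := by
          intro i
          induction i using Nat.strong_induction_on with
          | _ i IH2 =>
            intro hiM
            match i, hiM with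
            | 0, _ => exact ha0
            | 1, h => exact ha1
            | (i+2), h =>
              have hz1 : a (i + 1) = 0 := IH2 (i+1) (by omega) (by omega)
              have hz0 : a i = 0 := IH2 i (by omega) (by omega)
              have := hrel (i + 1) (by omega) (by omega)
              simp only [Nat.add_sub_cancel] at this
              rw [hz1, hz0] at this
              rw [hf.ctil_of_ge le_rfl] at this
              have h2 : ctil f 0 (a (i + 2)) = 0 := by linarith
              by_contra hne
              have hpos : 0 < a (i + 2) := lt_of_le_of_ne (habox (i+2)).1 (Ne.symm hne)
              have := hf.ctil_gt_left (a := 0) (b := a (i+2)) le_rfl hpos (habox (i+2)).2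
              linarith
        have := hzero M le_rfl
        have := haM M le_rfl
        linarith
      · -- j ≥ 1 : use the relation at j
        have hprev : a (j - 1) < a j := by
          have := IH (j - 1) (by omega) (by omega)
          convert this using 2
          omega
        have hrelj := hrel j hj1 hjM
        have hc1 : ctil f (a (j - 1)) (a j) < a j :=
          hf.ctil_lt_right (habox (j-1)).1 hprev (habox j).2
        have hc2 : ctil f (a j) (a (j + 1)) ≤ a j := hf.ctil_le_left hcon
        linarith
  exact ⟨a, ha0, haM M le_rfl, hordered, habox, hrel⟩

end Dens

/-- a stationary quantizer system in sequence form -/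
structure Sys (f : ℝ → ℝ) (M : ℕ) (A Y : ℕ → ℝ) : Prop where
  h0 : A 0 = 0
  hM : A M = 1
  mono : ∀ i, i < M → A i < A (i + 1)
  cent : ∀ i, i < M → Y i = ct f (A i) (A (i + 1))
  mid : ∀ i, i + 1 < M → A (i + 1) = (Y i + Y (i + 1)) / 2

namespace Sys

variable {f : ℝ → ℝ} {M : ℕ} {A Y : ℕ → ℝ} (hs : Sys f M A Y)
include hs

lemma mole : ∀ j, j ≤ M → ∀ i, i ≤ j → A i ≤ A j := by
  intro j
  induction j with
  | zero => intro _ i hi; interval_cases i; exact le_rfl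
  | succ n ih =>
    intro hn i hi
    rcases Nat.lt_succ_iff_lt_or_eq.mp (Nat.lt_succ_of_le hi) with h | rfl
    · exact le_trans (ih (by omega) i (by omega)) (hs.mono n (by omega)).le
    · exact le_rfl

lemma molt : ∀ i j, i < j → j ≤ M → A i < A j := by
  intro i j hij hj
  have h1 : A i < A (i + 1) := hs.mono i (by omega)
  exact lt_of_lt_of_le h1 (hs.mole j hj (i + 1) (by omega))

lemma nonneg {i : ℕ} (hi : i ≤ M) : 0 ≤ A i := by
  rw [← hs.h0]; exact hs.mole i hi 0 (Nat.zero_le i)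

lemma le_one {i : ℕ} (hi : i ≤ M) : A i ≤ 1 := by
  rw [← hs.hM]; exact hs.mole M le_rfl i hi

lemma lt_one {i : ℕ} (hi : i < M) : A i < 1 := by
  rw [← hs.hM]; exact hs.molt i M hi le_rfl

end Sys

namespace Dens

variable {f : ℝ → ℝ} (hf : Dens f)
include hf

/-- two stationary systems cannot have A 1 < B 1 -/
lemma sys_not_lt {M : ℕ} (hM : 0 < M) {A Y B Z : ℕ → ℝ}
    (hA : Sys f M A Y) (hB : Sys f M B Z) (h1 : A 1 < B 1) : False := by
  -- M = 1 is immediate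
  rcases Nat.lt_or_ge M 2 with hM1 | hM2
  · have e1 : M = 1 := by omega
    subst e1
    rw [hA.hM, hB.hM] at h1
    exact lt_irrefl _ h1
  obtain ⟨N, rfl⟩ : ∃ N, M = N + 2 := ⟨M - 2, by omega⟩
  set d : ℕ → ℝ := fun i => B i - A i with hd
  set e : ℕ → ℝ := fun i => Z i - Y i with he
  have hd0 : d 0 = 0 := by rw [hd]; dsimp only; rw [hA.h0, hB.h0]; ring
  have hd1 : 0 < d 1 := by rw [hd]; dsimp only; linarith
  -- the invariant
  have hC : ∀ k, k ≤ N + 1 →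
      (0 ≤ d k ∧ d k ≤ e k ∧
        (k + 1 ≤ N + 1 → (e k ≤ d (k + 1) ∧ d k ≤ d (k + 1) ∧ 0 < d (k + 1)))) := by
    intro k
    induction k with
    | zero =>
      intro _
      have hA1pos : 0 < A 1 := by
        have := hA.molt 0 1 (by omega) (by omega); rw [hA.h0] at this; exact this
      have hB1lt : B 1 < 1 := hB.lt_one (by omega)
      have hA1lt : A 1 < 1 := hA.lt_one (by omega)
      have hY0 : Y 0 = ct f 0 (A 1) := by
        have := hA.cent 0 (by omega); rw [hA.h0] at this; exact this
      have hZ0 : Z 0 = ct f 0 (B 1) := by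
        have := hB.cent 0 (by omega); rw [hB.h0] at this; exact this
      have he0pos : 0 < e 0 := by
        rw [he]; dsimp only
        rw [hY0, hZ0]
        have := hf.ct_mono_b (a := 0) (b := A 1) (b' := B 1) le_rfl hA1pos h1 hA1lt
        linarith
      refine ⟨le_of_eq hd0.symm, by linarith [hd0], fun _ => ⟨?_, by linarith [hd0], hd1⟩⟩
      -- e 0 ≤ d 1
      have step1 : ct f 0 (B 1) ≤ ct f (d 1) (B 1) := by
        refine hf.ct_mono_a le_rfl hd1.le ?_ (hB.le_one (by omega))
        rw [hd]; dsimp only; linarith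
      have step2 : ct f (0 + d 1) (A 1 + d 1) ≤ ct f 0 (A 1) + d 1 := by
        refine hf.ct_shift le_rfl hA1pos hA1lt.le hd1.le ?_
        have : (0:ℝ) + d 1 < B 1 := by rw [hd]; dsimp only; linarith
        linarith [hB.le_one (show 1 ≤ N + 2 by omega), hB1lt]
      have heq : A 1 + d 1 = B 1 := by rw [hd]; dsimp only; ring
      have heq0 : (0:ℝ) + d 1 = d 1 := by ring
      rw [heq, heq0] at step2
      rw [he]; dsimp only
      rw [hY0, hZ0]
      linarith
    | succ k IH =>
      intro hk1
      obtain ⟨ih1, ih2, ih3⟩ := IH (by omega)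
      obtain ⟨ih4, ih5, ih6⟩ := ih3 (by omega)
      -- midpoint relations give e (k+1) = 2 d (k+1) - e k
      have hmidA := hA.mid k (by omega)
      have hmidB := hB.mid k (by omega)
      have hekp : e (k + 1) = 2 * d (k + 1) - e k := by
        rw [he, hd]; dsimp only
        have hy : Y (k + 1) = 2 * A (k + 1) - Y k := by linarith
        have hz : Z (k + 1) = 2 * B (k + 1) - Z k := by linarith
        rw [hy, hz]; ring
      have hge : d (k + 1) ≤ e (k + 1) := by rw [hekp]; linarith
      refine ⟨ih6.le, hge, ?_⟩
      intro hk2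
      -- part (a): d (k+1) ≤ d (k+2)
      have hBk2lt1 : B (k + 2) < 1 := hB.lt_one (by omega)
      have hBk1lt1 : B (k + 1) < 1 := hB.lt_one (by omega)
      have hYk1 : Y (k + 1) = ct f (A (k + 1)) (A (k + 2)) := hA.cent (k + 1) (by omega)
      have hZk1 : Z (k + 1) = ct f (B (k + 1)) (B (k + 2)) := hB.cent (k + 1) (by omega)
      have heqB1 : B (k + 1) = A (k + 1) + d (k + 1) := by rw [hd]; dsimp only; ring
      have heqB2 : B (k + 2) = A (k + 2) + d (k + 2) := by rw [hd]; dsimp only; ring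
      have hAmono : A (k + 1) < A (k + 2) := hA.mono (k + 1) (by omega)
      have hBmono : B (k + 1) < B (k + 2) := hB.mono (k + 1) (by omega)
      have hApos : 0 ≤ A (k + 1) := hA.nonneg (by omega)
      have hBpos : 0 ≤ B (k + 1) := hB.nonneg (by omega)
      have hA2le1 : A (k + 2) ≤ 1 := hA.le_one (by omega)
      have hB2le1 : B (k + 2) ≤ 1 := hB.le_one (by omega)
      have hda : d (k + 1) ≤ d (k + 2) := by
        by_contra hcc
        push_neg at hcc
        have s1 : ct f (B (k + 1)) (B (k + 2)) < ct f (B (k + 1)) (A (k + 2) + d (k + 1)) := by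
          refine hf.ct_mono_b hBpos hBmono ?_ hBk2lt1
          rw [heqB2]; linarith
        have s2 : ct f (A (k + 1) + d (k + 1)) (A (k + 2) + d (k + 1))
            ≤ ct f (A (k + 1)) (A (k + 2)) + d (k + 1) := by
          refine hf.ct_shift hApos hAmono hA2le1 ih6.le ?_
          rw [← heqB1]; exact hBk1lt1
        rw [← heqB1] at s2
        have : e (k + 1) < d (k + 1) := by
          rw [he]; dsimp only
          rw [hYk1, hZk1]
          linarith
        linarith
      have hdpos2 : 0 < d (k + 2) := lt_of_lt_of_le ih6 hda
      refine ⟨?_, hda, hdpos2⟩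
      -- part (b): e (k+1) ≤ d (k+2)
      have s1 : ct f (B (k + 1)) (B (k + 2)) ≤ ct f (A (k + 1) + d (k + 2)) (B (k + 2)) := by
        refine hf.ct_mono_a hBpos ?_ ?_ hB2le1
        · rw [heqB1]; linarith
        · rw [heqB2]; linarith
      have s2 : ct f (A (k + 1) + d (k + 2)) (A (k + 2) + d (k + 2))
          ≤ ct f (A (k + 1)) (A (k + 2)) + d (k + 2) := by
        refine hf.ct_shift hApos hAmono hA2le1 hdpos2.le ?_
        calc A (k + 1) + d (k + 2) < A (k + 2) + d (k + 2) := by linarith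
          _ = B (k + 2) := heqB2.symm
          _ < 1 := hBk2lt1
      rw [← heqB2] at s2
      rw [he]; dsimp only
      rw [hYk1, hZk1]
      linarith
  -- conclusion: strict shift at the last cell
  obtain ⟨c1, c2, _⟩ := hC (N + 1) le_rfl
  obtain ⟨_, _, c3⟩ := hC N (by omega)
  obtain ⟨_, _, hdN1⟩ := c3 (by omega)
  have hYN : Y (N + 1) = ct f (A (N + 1)) 1 := by
    have := hA.cent (N + 1) (by omega)
    rw [hA.hM] at this; exact this
  have hZN : Z (N + 1) = ct f (B (N + 1)) 1 := by
    have := hB.cent (N + 1) (by omega)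
    rw [hB.hM] at this; exact this
  have heqB : B (N + 1) = A (N + 1) + d (N + 1) := by rw [hd]; dsimp only; ring
  have hstrict : ct f (A (N + 1) + d (N + 1)) 1 < ct f (A (N + 1)) 1 + d (N + 1) := by
    refine hf.ct_shift_strict (hA.nonneg (by omega)) hdN1 ?_
    rw [← heqB]; exact hB.lt_one (by omega)
  have : e (N + 1) < d (N + 1) := by
    rw [he]; dsimp only
    rw [hYN, hZN, heqB]
    linarith
  linarith

/-- determinism given equal first boundary -/
lemma sys_det {M : ℕ} (hM : 0 < M) {A Y B Z : ℕ → ℝ}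
    (hA : Sys f M A Y) (hB : Sys f M B Z) (h1 : A 1 = B 1) :
    (∀ i, i ≤ M → A i = B i) ∧ (∀ i, i < M → Y i = Z i) := by
  have claim : ∀ k, k ≤ M → (A k = B k ∧ ∀ i, i < k → Y i = Z i) := by
    intro k
    induction k with
    | zero => intro _; exact ⟨by rw [hA.h0, hB.h0], fun i hi => absurd hi (by omega)⟩
    | succ k IH =>
      intro hk
      obtain ⟨ihA, ihY⟩ := IH (by omega)
      have hYk : Y k = Z k := by
        rcases Nat.eq_zero_or_pos k with rfl | hkpos
        · have e1 := hA.cent 0 (by omega)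
          have e2 := hB.cent 0 (by omega)
          rw [e1, e2, hA.h0, hB.h0]
          rcases Nat.eq_or_lt_of_le (show 1 ≤ M by omega) with h | h
          · rw [show A 1 = B 1 from h1]
          · rw [show A 1 = B 1 from h1]
        · obtain ⟨j, rfl⟩ : ∃ j, k = j + 1 := ⟨k - 1, by omega⟩
          have m1 := hA.mid j (by omega)
          have m2 := hB.mid j (by omega)
          have hYj : Y j = Z j := ihY j (by omega)
          have hAj : A (j + 1) = B (j + 1) := ihA
          linarith
      refine ⟨?_, fun i hi => ?_⟩
      · rcases Nat.eq_or_lt_of_le hk with h | h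
        · have hAe : A (k + 1) = 1 := by rw [h, hA.hM]
          have hBe : B (k + 1) = 1 := by rw [h, hB.hM]
          rw [hAe, hBe]
        · -- k + 1 < M : use strict monotonicity of ct in b
          have e1 := hA.cent k (by omega)
          have e2 := hB.cent k (by omega)
          have e2' : Z k = ct f (A k) (B (k + 1)) := by rw [e2, ← ihA]
          have hceq : ct f (A k) (A (k + 1)) = ct f (A k) (B (k + 1)) := by
            rw [← e1, ← e2', hYk]
          by_contra hne
          rcases lt_or_gt_of_ne hne with hlt | hgt
          · have := hf.ct_mono_b (hA.nonneg (show k ≤ M by omega))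
              (hA.mono k (by omega)) hlt (hA.lt_one (by omega))
            rw [hceq] at this; exact lt_irrefl _ this
          · have hb1 : B (k + 1) < 1 := hB.lt_one h
            have hab : A k < B (k + 1) := by
              rw [ihA]; exact hB.mono k (by omega)
            have := hf.ct_mono_b (hA.nonneg (show k ≤ M by omega)) hab hgt hb1
            rw [hceq] at this
            exact lt_irrefl _ this
      · rcases Nat.lt_succ_iff_lt_or_eq.mp hi with h | rfl
        · exact ihY i h
        · exact hYk
  exact ⟨fun i hi => (claim i hi).1, fun i hi => (claim M le_rfl).2 i hi⟩

end Dens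

/-- For a source on (0,1) with a log-concave (positive) density, the `M`-level
regular quantizer stationary points — satisfying simultaneously the centroid condition and the
nearest-neighbor (midpoint) condition — are unique; i.e., the mean squared error has a unique
local (hence global) minimum (Trushkin's condition). -/
theorem logConcave_unique_stationary_quantizer
    (M : ℕ) (hM : 0 < M)
    (f : ℝ → ℝ) (hfpos : ∀ x ∈ Ioo (0:ℝ) 1, 0 < f x)
    (hfzero : ∀ x, x ∉ Ioo (0:ℝ) 1 → f x = 0)
    (hfnorm : ∫ x in Ioo (0:ℝ) 1, f x = 1)
    (hfint : IntegrableOn f (Ioo (0:ℝ) 1))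
    (hfint1 : IntegrableOn (fun x => x * f x) (Ioo (0:ℝ) 1))
    (hlc : ConcaveOn ℝ (Ioo (0:ℝ) 1) (fun x => Real.log (f x))) :
    ∃! p : (Fin (M + 1) → ℝ) × (Fin M → ℝ),
      p.1 0 = 0 ∧ p.1 (Fin.last M) = 1 ∧ StrictMono p.1 ∧
      (∀ k : Fin M, p.2 k ∈ Ioo (p.1 k.castSucc) (p.1 k.succ)) ∧
      (∀ k : Fin M,
        p.2 k = (∫ x in Ioc (p.1 k.castSucc) (p.1 k.succ), x * f x)
          / ∫ x in Ioc (p.1 k.castSucc) (p.1 k.succ), f x) ∧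
      (∀ k : ℕ, ∀ h : k + 1 < M,
        p.1 ⟨k + 1, by omega⟩ = (p.2 ⟨k, by omega⟩ + p.2 ⟨k + 1, h⟩) / 2) := by
  classical
  -- package the density hypotheses
  have hint : Integrable f := by
    have hfglob : f = (Ioo (0:ℝ) 1).indicator f := by
      funext x
      by_cases h : x ∈ Ioo (0:ℝ) 1
      · rw [indicator_of_mem h]
      · rw [indicator_of_notMem h, hfzero x h]
    rw [hfglob]
    exact (integrable_indicator_iff measurableSet_Ioo).mpr hfint
  have hint1 : Integrable (fun x => x * f x) := by
    have hfglob : (fun x => x * f x) = (Ioo (0:ℝ) 1).indicator (fun x => x * f x) := by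
      funext x
      by_cases h : x ∈ Ioo (0:ℝ) 1
      · rw [indicator_of_mem h]
      · rw [indicator_of_notMem h, hfzero x h, mul_zero]
    rw [hfglob]
    exact (integrable_indicator_iff measurableSet_Ioo).mpr hfint1
  have hD : Dens f := ⟨hfpos, hfzero, hint, hint1, hlc⟩
  -- existence of a fixed point
  obtain ⟨a, ha0, haM, hmono, habox, hrel⟩ := hD.exists_fix M hM
  have hSysA : Sys f M a (fun i => ct f (a i) (a (i + 1))) := by
    refine ⟨ha0, haM, hmono, fun i _ => rfl, fun i hi => ?_⟩
    have h2 := hrel (i + 1) (by omega) hi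
    simp only [Nat.add_sub_cancel] at h2
    rw [hD.ctil_of_lt (hmono i (by omega)), hD.ctil_of_lt (hmono (i + 1) (by omega))] at h2
    linarith
  set P : (Fin (M + 1) → ℝ) × (Fin M → ℝ) :=
    (fun k => a k, fun k => ct f (a (k : ℕ)) (a ((k : ℕ) + 1))) with hP
  have hPcond : P.1 0 = 0 ∧ P.1 (Fin.last M) = 1 ∧ StrictMono P.1 ∧
      (∀ k : Fin M, P.2 k ∈ Ioo (P.1 k.castSucc) (P.1 k.succ)) ∧
      (∀ k : Fin M,
        P.2 k = (∫ x in Ioc (P.1 k.castSucc) (P.1 k.succ), x * f x)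
          / ∫ x in Ioc (P.1 k.castSucc) (P.1 k.succ), f x) ∧
      (∀ k : ℕ, ∀ h : k + 1 < M,
        P.1 ⟨k + 1, by omega⟩ = (P.2 ⟨k, by omega⟩ + P.2 ⟨k + 1, h⟩) / 2) := by
    refine ⟨?_, ?_, ?_, ?_, ?_, ?_⟩
    · show a ((0 : Fin (M + 1)) : ℕ) = 0
      simp only [Fin.val_zero]
      exact ha0
    · show a ((Fin.last M : Fin (M + 1)) : ℕ) = 1
      simp only [Fin.val_last]
      exact haM
    · intro i j hij
      exact hSysA.molt i j (by exact_mod_cast hij) (by omega)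
    · intro k
      simp only [hP, Fin.coe_castSucc, Fin.val_succ]
      exact ⟨hD.ct_gt (hSysA.nonneg (by omega)) (hmono k k.isLt)
          (hSysA.lt_one k.isLt),
        hD.ct_lt (hSysA.nonneg (by omega)) (hmono k k.isLt) (hSysA.lt_one k.isLt)⟩
    · intro k
      simp only [hP, Fin.coe_castSucc, Fin.val_succ]
      rfl
    · intro k h
      have := hSysA.mid k h
      simp only [hP]
      exact this
  refine ⟨P, hPcond, ?_⟩
  -- uniqueness
  rintro q ⟨q1, q2, q3, q4, q5, q6⟩
  set Aq : ℕ → ℝ := fun i => if h : i ≤ M then q.1 ⟨i, by omega⟩ else 1 with hAq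
  set Yq : ℕ → ℝ := fun i => if h : i < M then q.2 ⟨i, h⟩ else 0 with hYq
  have hAqv : ∀ i (h : i ≤ M), Aq i = q.1 ⟨i, by omega⟩ := by
    intro i h; rw [hAq]; dsimp only; rw [dif_pos h]
  have hYqv : ∀ i (h : i < M), Yq i = q.2 ⟨i, h⟩ := by
    intro i h; rw [hYq]; dsimp only; rw [dif_pos h]
  have hSysQ : Sys f M Aq Yq := by
    refine ⟨?_, ?_, ?_, ?_, ?_⟩
    · rw [hAqv 0 (by omega)]
      convert q1 using 2
      exact Fin.ext (by simp)
    · rw [hAqv M le_rfl]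
      convert q2 using 2
      exact Fin.ext (by simp)
    · intro i hi
      rw [hAqv i (by omega), hAqv (i + 1) (by omega)]
      exact q3 (by exact Fin.mk_lt_mk.mpr (by omega))
    · intro i hi
      rw [hYqv i hi, hAqv i (by omega), hAqv (i + 1) (by omega)]
      have := q5 ⟨i, hi⟩
      rw [this]
      show _ = mo f _ _ / ms f _ _
      have hc : (⟨i, hi⟩ : Fin M).castSucc = ⟨i, by omega⟩ := Fin.ext (by simp)
      have hs : (⟨i, hi⟩ : Fin M).succ = ⟨i + 1, by omega⟩ := Fin.ext (by simp)
      rw [hc, hs]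
      rfl
    · intro i hi
      rw [hAqv (i + 1) (by omega), hYqv i (by omega), hYqv (i + 1) hi]
      exact q6 i hi
  -- compare first boundaries
  rcases lt_trichotomy (Aq 1) (a 1) with hlt | heq | hgt
  · exact absurd (hD.sys_not_lt hM hSysQ hSysA hlt) (fun h => h)
  · obtain ⟨hAeq, hYeq⟩ := hD.sys_det hM hSysQ hSysA heq
    have e1 : q.1 = P.1 := by
      funext k
      have h1 : q.1 k = Aq k := by
        rw [hAqv k (by omega)]
      rw [h1, hAeq k (by omega)]
    have e2 : q.2 = P.2 := by
      funext k
      have h1 : q.2 k = Yq k := by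
        rw [hYqv k k.isLt]
      rw [h1, hYeq k k.isLt]
    exact Prod.ext e1 e2
  · exact absurd (hD.sys_not_lt hM hSysA hSysQ hgt) (fun h => h)
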